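/- If c_e ≤ p_e ≤ r_e and r_e·X/(e−1) < k_e < c_e·X·e/(e−1), then the stationary dispatching factor α∘ = (1/X)·(k_e/p_e − 1/b_e) satisfies 0 < α∘ < 1. -/

import Mathlib

/-- If `c_e ≤ p_e ≤ r_e` and `r_e·X/(e−1) < k_e < c_e·X·e/(e−1)`, then the
stationary dispatching factor `α∘ = (1/X)·(k_e/p_e − 1/b_e)` with
`b_e = (e−1)/X` satisfies `0 < α∘ < 1`. -/
theorem stmt_2 (X ce re ke pe : ℝ)
    (hX : 0 < X) (hce : 0 < ce) (hcr : ce ≤ re) (hke : 0 < ke)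
    (h1 : ce ≤ pe) (h2 : pe ≤ re)
    (h3 : re * X / (Real.exp 1 - 1) < ke)
    (h4 : ke < ce * X * Real.exp 1 / (Real.exp 1 - 1)) :
    0 < (1 / X) * (ke / pe - 1 / ((Real.exp 1 - 1) / X)) ∧
      (1 / X) * (ke / pe - 1 / ((Real.exp 1 - 1) / X)) < 1 := by
  have hE : 0 < Real.exp 1 - 1 := by
    have := Real.add_one_lt_exp (by norm_num : (1:ℝ) ≠ 0); linarith
  have hpe : 0 < pe := lt_of_lt_of_le hce h1
  have h3' : re * X < ke * (Real.exp 1 - 1) := (div_lt_iff₀ hE).mp h3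
  have h4' : ke * (Real.exp 1 - 1) < ce * X * Real.exp 1 := (lt_div_iff₀ hE).mp h4
  rw [one_div_div]
  constructor
  · have h : 0 < ke / pe - X / (Real.exp 1 - 1) := by
      rw [sub_pos, div_lt_div_iff₀ hE hpe]; nlinarith
    positivity
  · rw [one_div, inv_mul_lt_iff₀ hX, mul_one, sub_lt_iff_lt_add, div_lt_iff₀ hpe,
      add_mul, div_mul_eq_mul_div, ← sub_lt_iff_lt_add', lt_div_iff₀ hE]
    nlinarith [mul_le_mul_of_nonneg_right h1 (le_of_lt (by positivity : (0:ℝ) < X * Real.exp 1))]
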